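/- Let 0 < q < 1 and a < b. If f, g : [a,b] → ℝ are both q-increasing or both q-decreasing on [a,b] and qR-integrable, then R_q(fg;a,b) ≥ (1/(b−a))·R_q(f;a,b)·R_q(g;a,b). -/

import Mathlib

open scoped BigOperators
open Set

private lemma cheb_fin (F G w : ℕ → ℝ) (hw : ∀ k, 0 ≤ w k)
    (hFG : ∀ j k, 0 ≤ (F j - F k) * (G j - G k)) (n : ℕ) :
    (∑ k ∈ Finset.range n, F k * w k) * (∑ k ∈ Finset.range n, G k * w k) ≤
      (∑ k ∈ Finset.range n, w k) * (∑ k ∈ Finset.range n, F k * G k * w k) := by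
  have key : 0 ≤ ∑ j ∈ Finset.range n, ∑ k ∈ Finset.range n,
      w j * w k * ((F j - F k) * (G j - G k)) := by
    apply Finset.sum_nonneg; intro j _
    apply Finset.sum_nonneg; intro k _
    exact mul_nonneg (mul_nonneg (hw j) (hw k)) (hFG j k)
  have e1 : ∑ j ∈ Finset.range n, ∑ k ∈ Finset.range n,
        w j * w k * ((F j - F k) * (G j - G k))
      = (∑ j ∈ Finset.range n, ∑ k ∈ Finset.range n,
          (w j * w k * (F j * G j) - w j * w k * (F j * G k)))
      + (∑ j ∈ Finset.range n, ∑ k ∈ Finset.range n,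
          (w j * w k * (F k * G k) - w j * w k * (F k * G j))) := by
    rw [← Finset.sum_add_distrib]
    apply Finset.sum_congr rfl; intro j _
    rw [← Finset.sum_add_distrib]
    apply Finset.sum_congr rfl; intro k _; ring
  have e2 : (∑ j ∈ Finset.range n, ∑ k ∈ Finset.range n,
        (w j * w k * (F k * G k) - w j * w k * (F k * G j)))
      = (∑ j ∈ Finset.range n, ∑ k ∈ Finset.range n,
          (w j * w k * (F j * G j) - w j * w k * (F j * G k))) := by
    rw [Finset.sum_comm]
    apply Finset.sum_congr rfl; intro j _
    apply Finset.sum_congr rfl; intro k _; ring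
  have e3 : (∑ j ∈ Finset.range n, ∑ k ∈ Finset.range n,
        (w j * w k * (F j * G j) - w j * w k * (F j * G k)))
      = (∑ k ∈ Finset.range n, F k * G k * w k) * (∑ k ∈ Finset.range n, w k)
        - (∑ k ∈ Finset.range n, F k * w k) * (∑ k ∈ Finset.range n, G k * w k) := by
    rw [Finset.sum_mul_sum, Finset.sum_mul_sum, ← Finset.sum_sub_distrib]
    apply Finset.sum_congr rfl; intro j _
    rw [← Finset.sum_sub_distrib]
    apply Finset.sum_congr rfl; intro k _; ring
  rw [e1, e2, e3] at key
  linarith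

/-- q-Chebyshev inequality for the Riemann-type q-integral. -/
theorem q_chebyshev_Rq (q a b : ℝ) (f g : ℝ → ℝ)
    (hq0 : 0 < q) (hq1 : q < 1) (hab : a < b)
    (hmono :
      ((∀ x ∈ Ioc (0:ℝ) 1, f (a + (b - a) * (q * x)) ≤ f (a + (b - a) * x)) ∧
        (∀ x ∈ Ioc (0:ℝ) 1, g (a + (b - a) * (q * x)) ≤ g (a + (b - a) * x))) ∨
      ((∀ x ∈ Ioc (0:ℝ) 1, f (a + (b - a) * x) ≤ f (a + (b - a) * (q * x))) ∧
        (∀ x ∈ Ioc (0:ℝ) 1, g (a + (b - a) * x) ≤ g (a + (b - a) * (q * x)))))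
    (hsf : Summable (fun k : ℕ => f (a + (b - a) * q ^ k) * q ^ k))
    (hsg : Summable (fun k : ℕ => g (a + (b - a) * q ^ k) * q ^ k))
    (hsfg : Summable (fun k : ℕ => f (a + (b - a) * q ^ k) * g (a + (b - a) * q ^ k) * q ^ k)) :
    (b - a) * (1 - q) * ∑' k : ℕ, f (a + (b - a) * q ^ k) * g (a + (b - a) * q ^ k) * q ^ k ≥
      (1 / (b - a)) * ((b - a) * (1 - q) * ∑' k : ℕ, f (a + (b - a) * q ^ k) * q ^ k) *
        ((b - a) * (1 - q) * ∑' k : ℕ, g (a + (b - a) * q ^ k) * q ^ k) := by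
  set F : ℕ → ℝ := fun k => f (a + (b - a) * q ^ k) with hF
  set G : ℕ → ℝ := fun k => g (a + (b - a) * q ^ k) with hG
  set w : ℕ → ℝ := fun k => q ^ k with hwdef
  have hc : (0:ℝ) < b - a := sub_pos.mpr hab
  have hp : (0:ℝ) < 1 - q := sub_pos.mpr hq1
  have hmem : ∀ k : ℕ, (q ^ k : ℝ) ∈ Ioc (0:ℝ) 1 :=
    fun k => ⟨pow_pos hq0 k, pow_le_one₀ hq0.le hq1.le⟩
  have hsucc : ∀ k : ℕ, a + (b - a) * q ^ (k + 1) = a + (b - a) * (q * q ^ k) := by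
    intro k; rw [pow_succ]; ring
  -- F and G are either both antitone or both monotone on ℕ
  have hFG : ∀ j k, 0 ≤ (F j - F k) * (G j - G k) := by
    rcases hmono with ⟨hf, hg⟩ | ⟨hf, hg⟩
    · have hFa : Antitone F := antitone_nat_of_succ_le fun k => by
        have := hf (q ^ k) (hmem k)
        simpa [hF, hsucc k] using this
      have hGa : Antitone G := antitone_nat_of_succ_le fun k => by
        have := hg (q ^ k) (hmem k)
        simpa [hG, hsucc k] using this
      intro j k
      rcases le_total j k with h | h
      · nlinarith [hFa h, hGa h]
      · nlinarith [hFa h, hGa h]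
    · have hFa : Monotone F := monotone_nat_of_le_succ fun k => by
        have := hf (q ^ k) (hmem k)
        simpa [hF, hsucc k] using this
      have hGa : Monotone G := monotone_nat_of_le_succ fun k => by
        have := hg (q ^ k) (hmem k)
        simpa [hG, hsucc k] using this
      intro j k
      rcases le_total j k with h | h
      · nlinarith [hFa h, hGa h]
      · nlinarith [hFa h, hGa h]
  have hwn : ∀ k, 0 ≤ w k := fun k => (pow_pos hq0 k).le
  have hcheb := cheb_fin F G w hwn hFG
  have hsw : Summable w := summable_geometric_of_lt_one hq0.le hq1
  -- pass to the limit
  have hlim : (∑' k, F k * w k) * (∑' k, G k * w k) ≤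
      (∑' k, w k) * (∑' k, F k * G k * w k) := by
    have t1 := (hsf.hasSum.tendsto_sum_nat.mul hsg.hasSum.tendsto_sum_nat)
    have t2 := (hsw.hasSum.tendsto_sum_nat.mul hsfg.hasSum.tendsto_sum_nat)
    exact le_of_tendsto_of_tendsto' t1 t2 hcheb
  have hWs : (∑' k, w k) = (1 - q)⁻¹ := tsum_geometric_of_lt_one hq0.le hq1
  rw [hWs] at hlim
  have h2 : (1 - q) * ((∑' k, F k * w k) * (∑' k, G k * w k)) ≤
      ∑' k, F k * G k * w k := by
    have h := mul_le_mul_of_nonneg_left hlim hp.le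
    have hc2 : (1 - q) * ((1 - q)⁻¹ * ∑' k, F k * G k * w k)
        = ∑' k, F k * G k * w k := by
      rw [← mul_assoc, mul_inv_cancel₀ hp.ne', one_mul]
    rw [hc2] at h
    exact h
  rw [ge_iff_le]
  have h3 := mul_le_mul_of_nonneg_left h2 (mul_nonneg hc.le hp.le)
  have heq : 1 / (b - a) * ((b - a) * (1 - q) * ∑' k, F k * w k) *
      ((b - a) * (1 - q) * ∑' k, G k * w k)
      = (b - a) * (1 - q) * ((1 - q) * ((∑' k, F k * w k) * (∑' k, G k * w k))) := by
    field_simp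
  calc 1 / (b - a) * ((b - a) * (1 - q) * ∑' k, F k * w k) *
      ((b - a) * (1 - q) * ∑' k, G k * w k)
      = (b - a) * (1 - q) * ((1 - q) * ((∑' k, F k * w k) * (∑' k, G k * w k))) := heq
    _ ≤ (b - a) * (1 - q) * ∑' k, F k * G k * w k := h3
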